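/- Let V : ℝ^3 → Matrix (Fin N) (Fin N) ℂ be twice continuously differentiable with V(θ) unitary for every θ, and define ñ_j(θ) = −i V(θ)† ∂_j V(θ) for j = 1,2,3. Then pointwise on ℝ^3: 2 · tr(ñ_1 ∂_2 ñ_3) = ∂_3 tr(ñ_1 ñ_2) − ∂_1 tr(ñ_2 ñ_3) + ∂_2 tr(ñ_3 ñ_1) − i · tr(ñ_1 (ñ_2 ñ_3 − ñ_3 ñ_2)). (This expresses the coordinate form tr(ñ_1 ∂_2 ñ_3) of the winding number density as the standard Levi-Civita density up to total derivatives.) -/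

import Mathlib

open Matrix
open scoped Matrix.Norms.L2Operator

/-- Partial derivative in the `j`-th coordinate of a matrix-valued function on `ℝ^m`. -/
noncomputable def matPderiv {N m : ℕ} (j : Fin m)
    (V : (Fin m → ℝ) → Matrix (Fin N) (Fin N) ℂ) (θ : Fin m → ℝ) :
    Matrix (Fin N) (Fin N) ℂ :=
  deriv (fun s => V (Function.update θ j s)) (θ j)

/-- Partial derivative in the `j`-th coordinate of a scalar function on `ℝ^m`. -/
noncomputable def scalPderiv {m : ℕ} (j : Fin m) (f : (Fin m → ℝ) → ℂ) (θ : Fin m → ℝ) : ℂ :=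
  deriv (fun s => f (Function.update θ j s)) (θ j)

/-- The connection-like matrix `ñ_j(θ) = −i V(θ)† ∂_j V(θ)`. -/
noncomputable def ntilde {N m : ℕ} (V : (Fin m → ℝ) → Matrix (Fin N) (Fin N) ℂ)
    (j : Fin m) (θ : Fin m → ℝ) : Matrix (Fin N) (Fin N) ℂ :=
  (-Complex.I) • ((V θ)ᴴ * matPderiv j V θ)

/-! ### Auxiliary lemmas -/

lemma pderiv_eq_fderiv {F : Type*} [NormedAddCommGroup F] [NormedSpace ℝ F] {m : ℕ} (j : Fin m)
    (f : (Fin m → ℝ) → F) (θ : Fin m → ℝ) (hf : DifferentiableAt ℝ f θ) :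
    deriv (fun s => f (Function.update θ j s)) (θ j) = fderiv ℝ f θ (Pi.single j 1) := by
  have hu : HasDerivAt (fun s : ℝ => Function.update θ j s) (Pi.single j 1) (θ j) := by
    have he : (fun s : ℝ => Function.update θ j s)
        = fun s => Function.update θ j 0 + s • Pi.single j (1:ℝ) := by
      funext s; funext i
      by_cases h : i = j
      · subst h; simp
      · simp [Function.update_of_ne h, Pi.single_eq_of_ne h]
    rw [he]
    simpa using ((hasDerivAt_id (θ j)).smul_const (Pi.single j (1:ℝ))).const_add
      (Function.update θ j 0)
  have hf' : HasFDerivAt f (fderiv ℝ f θ) (Function.update θ j (θ j)) := by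
    rw [Function.update_eq_self]; exact hf.hasFDerivAt
  exact (hf'.comp_hasDerivAt (θ j) hu).deriv

/-- Conjugate transpose as a continuous `ℝ`-linear map. -/
noncomputable def ctCLM (N : ℕ) :
    Matrix (Fin N) (Fin N) ℂ →L[ℝ] Matrix (Fin N) (Fin N) ℂ :=
  LinearMap.mkContinuous
    { toFun := fun M => Mᴴ
      map_add' := fun M M' => Matrix.conjTranspose_add M M'
      map_smul' := fun r M => by
        ext i j; simp [Matrix.conjTranspose_apply, Complex.real_smul] }
    1 (fun M => by rw [one_mul]; exact le_of_eq (Matrix.l2_opNorm_conjTranspose M))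

@[simp] lemma ctCLM_apply {N : ℕ} (M : Matrix (Fin N) (Fin N) ℂ) : ctCLM N M = Mᴴ := rfl

/-- Trace as a continuous `ℝ`-linear map. -/
noncomputable def trCLM (N : ℕ) : Matrix (Fin N) (Fin N) ℂ →L[ℝ] ℂ :=
  LinearMap.toContinuousLinearMap ((Matrix.traceLinearMap (Fin N) ℂ ℂ).restrictScalars ℝ)

@[simp] lemma trCLM_apply {N : ℕ} (M : Matrix (Fin N) (Fin N) ℂ) : trCLM N M = M.trace := rfl

section Aux

variable {N : ℕ} {V : (Fin 3 → ℝ) → Matrix (Fin N) (Fin N) ℂ}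

lemma ntilde_eq (hV : ContDiff ℝ 2 V) (j : Fin 3) :
    ntilde V j = fun θ => (-Complex.I) • ((V θ)ᴴ * fderiv ℝ V θ (Pi.single j 1)) := by
  funext θ
  rw [ntilde, matPderiv, pderiv_eq_fderiv j V θ (hV.differentiable two_ne_zero θ)]

lemma ntilde_hasFDerivAt (hV : ContDiff ℝ 2 V) (j : Fin 3) (θ : Fin 3 → ℝ) :
    HasFDerivAt (ntilde V j)
      ((-Complex.I) • ((V θ)ᴴ •
          (((fderiv ℝ V θ).comp (0 : (Fin 3 → ℝ) →L[ℝ] (Fin 3 → ℝ)))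
            + (fderiv ℝ (fderiv ℝ V) θ).flip (Pi.single j 1))
        + (((ctCLM N).comp (fderiv ℝ V θ)).smulRight (fderiv ℝ V θ (Pi.single j 1))))) θ := by
  rw [ntilde_eq hV j]
  have h1 : HasFDerivAt (fun θ' => (V θ')ᴴ) ((ctCLM N).comp (fderiv ℝ V θ)) θ :=
    (ctCLM N).hasFDerivAt.comp θ (hV.differentiable two_ne_zero θ).hasFDerivAt
  have h2 : HasFDerivAt (fun θ' => fderiv ℝ V θ' (Pi.single j 1))
      (((fderiv ℝ V θ).comp (0 : (Fin 3 → ℝ) →L[ℝ] (Fin 3 → ℝ)))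
        + (fderiv ℝ (fderiv ℝ V) θ).flip (Pi.single j 1)) θ :=
    (((hV.fderiv_right (m := 1) one_add_one_eq_two.le).differentiable one_ne_zero) θ).hasFDerivAt.clm_apply
      (hasFDerivAt_const _ _)
  exact (h1.mul' h2).const_smul (-Complex.I)

lemma ntilde_differentiable (hV : ContDiff ℝ 2 V) (j : Fin 3) :
    Differentiable ℝ (ntilde V j) :=
  fun θ => (ntilde_hasFDerivAt hV j θ).differentiableAt

lemma fderiv_ntilde_apply (hV : ContDiff ℝ 2 V) (j k : Fin 3) (θ : Fin 3 → ℝ) :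
    fderiv ℝ (ntilde V j) θ (Pi.single k 1)
      = (-Complex.I) • ((fderiv ℝ V θ (Pi.single k 1))ᴴ * fderiv ℝ V θ (Pi.single j 1)
          + (V θ)ᴴ * (fderiv ℝ (fderiv ℝ V) θ (Pi.single k 1)) (Pi.single j 1)) := by
  rw [(ntilde_hasFDerivAt hV j θ).fderiv]
  simp [smul_eq_mul, mul_add, add_comm]

lemma unit_deriv (hV : ContDiff ℝ 2 V) (hunit : ∀ θ, (V θ)ᴴ * V θ = 1) (k : Fin 3)
    (θ : Fin 3 → ℝ) :
    (fderiv ℝ V θ (Pi.single k 1))ᴴ * V θ + (V θ)ᴴ * fderiv ℝ V θ (Pi.single k 1) = 0 := by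
  have hVd : Differentiable ℝ V := hV.differentiable two_ne_zero
  have h1 : HasFDerivAt (fun θ' => (V θ')ᴴ) ((ctCLM N).comp (fderiv ℝ V θ)) θ :=
    (ctCLM N).hasFDerivAt.comp θ (hVd θ).hasFDerivAt
  have h := h1.mul' (hVd θ).hasFDerivAt
  have hc : ((fun θ' => (V θ')ᴴ) * V) = fun _ => (1 : Matrix (Fin N) (Fin N) ℂ) := by
    funext θ'; exact hunit θ'
  rw [hc] at h
  have h0 := h.unique (hasFDerivAt_const _ _)
  have := congrArg (fun L => L (Pi.single k 1)) h0
  simpa [smul_eq_mul, add_comm] using this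

lemma key_prod (hV : ContDiff ℝ 2 V) (hunit : ∀ θ, (V θ)ᴴ * V θ = 1) (j k : Fin 3)
    (θ : Fin 3 → ℝ) :
    (fderiv ℝ V θ (Pi.single j 1))ᴴ * fderiv ℝ V θ (Pi.single k 1)
      = ntilde V j θ * ntilde V k θ := by
  have hVV : V θ * (V θ)ᴴ = 1 := mul_eq_one_comm.mp (hunit θ)
  have hadj : (fderiv ℝ V θ (Pi.single j 1))ᴴ
      = -((V θ)ᴴ * fderiv ℝ V θ (Pi.single j 1) * (V θ)ᴴ) := by
    have h2 : (fderiv ℝ V θ (Pi.single j 1))ᴴ * V θ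
        = -((V θ)ᴴ * fderiv ℝ V θ (Pi.single j 1)) :=
      eq_neg_of_add_eq_zero_left (unit_deriv hV hunit j θ)
    calc (fderiv ℝ V θ (Pi.single j 1))ᴴ
        = (fderiv ℝ V θ (Pi.single j 1))ᴴ * (V θ * (V θ)ᴴ) := by rw [hVV, mul_one]
      _ = ((fderiv ℝ V θ (Pi.single j 1))ᴴ * V θ) * (V θ)ᴴ := by rw [mul_assoc]
      _ = -((V θ)ᴴ * fderiv ℝ V θ (Pi.single j 1) * (V θ)ᴴ) := by rw [h2]; noncomm_ring
  rw [ntilde_eq hV j, ntilde_eq hV k]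
  simp only []
  rw [hadj]
  rw [smul_mul_assoc, mul_smul_comm, smul_smul]
  have hii : (-Complex.I) * (-Complex.I) = -1 := by simp [Complex.I_mul_I]
  rw [hii]
  simp only [neg_smul, one_smul, neg_mul]
  congr 1
  noncomm_ring

/-- Maurer–Cartan relation: `∂_a ñ_b − ∂_b ñ_a = −i (ñ_a ñ_b − ñ_b ñ_a)`. -/
lemma mc (hV : ContDiff ℝ 2 V) (hunit : ∀ θ, (V θ)ᴴ * V θ = 1) (a b : Fin 3) (θ : Fin 3 → ℝ) :
    fderiv ℝ (ntilde V b) θ (Pi.single a 1) - fderiv ℝ (ntilde V a) θ (Pi.single b 1)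
      = (-Complex.I) • (ntilde V a θ * ntilde V b θ - ntilde V b θ * ntilde V a θ) := by
  have hVd : Differentiable ℝ V := hV.differentiable two_ne_zero
  have hF'd : Differentiable ℝ (fderiv ℝ V) := (hV.fderiv_right (m := 1) one_add_one_eq_two.le).differentiable one_ne_zero
  have hsymm : (fderiv ℝ (fderiv ℝ V) θ) (Pi.single a 1) (Pi.single b 1)
      = (fderiv ℝ (fderiv ℝ V) θ) (Pi.single b 1) (Pi.single a 1) :=
    second_derivative_symmetric (fun y => (hVd y).hasFDerivAt) (hF'd θ).hasFDerivAt _ _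
  rw [fderiv_ntilde_apply hV b a θ, fderiv_ntilde_apply hV a b θ, ← smul_sub]
  congr 1
  rw [key_prod hV hunit a b θ, key_prod hV hunit b a θ, hsymm]
  abel

lemma trace_pd (hV : ContDiff ℝ 2 V) (a b k : Fin 3) (θ : Fin 3 → ℝ) :
    scalPderiv k (fun θ' => Matrix.trace (ntilde V a θ' * ntilde V b θ')) θ
      = Matrix.trace (fderiv ℝ (ntilde V a) θ (Pi.single k 1) * ntilde V b θ)
        + Matrix.trace (ntilde V a θ * fderiv ℝ (ntilde V b) θ (Pi.single k 1)) := by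
  have hA : HasFDerivAt (ntilde V a) (fderiv ℝ (ntilde V a) θ) θ :=
    (ntilde_differentiable hV a θ).hasFDerivAt
  have hB : HasFDerivAt (ntilde V b) (fderiv ℝ (ntilde V b) θ) θ :=
    (ntilde_differentiable hV b θ).hasFDerivAt
  have hmul := hA.mul' hB
  have htr : HasFDerivAt (fun θ' => Matrix.trace (ntilde V a θ' * ntilde V b θ'))
      ((trCLM N).comp (ntilde V a θ • fderiv ℝ (ntilde V b) θ
        + (fderiv ℝ (ntilde V a) θ).smulRight (ntilde V b θ))) θ :=
    (trCLM N).hasFDerivAt.comp θ hmul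
  rw [scalPderiv,
    pderiv_eq_fderiv k (fun θ' => Matrix.trace (ntilde V a θ' * ntilde V b θ')) θ
      htr.differentiableAt,
    htr.fderiv]
  simp [smul_eq_mul, add_comm]

/-- Pure trace algebra for the final assembly. -/
lemma trace_algebra (a b c p q r : Matrix (Fin N) (Fin N) ℂ) :
    2 * Matrix.trace (a * p)
      = (Matrix.trace ((q + Complex.I • (a * c - c * a)) * b)
          + Matrix.trace (a * (p + Complex.I • (b * c - c * b))))
        - (Matrix.trace ((r + (-Complex.I) • (a * b - b * a)) * c) + Matrix.trace (b * q))
        + (Matrix.trace (p * a) + Matrix.trace (c * r))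
        - Complex.I * Matrix.trace (a * (b * c - c * b)) := by
  simp only [Matrix.add_mul, Matrix.mul_add, Matrix.sub_mul, Matrix.mul_sub,
    Matrix.smul_mul, Matrix.mul_smul, Matrix.trace_add, Matrix.trace_sub, Matrix.trace_smul, smul_eq_mul,
    mul_assoc]
  rw [Matrix.trace_mul_comm b q, Matrix.trace_mul_comm p a, Matrix.trace_mul_comm c r,
    Matrix.trace_mul_comm c (a * b), Matrix.trace_mul_comm b (a * c)]
  simp only [mul_assoc]
  ring

end Aux

/-- For a twice continuously differentiable unitary-valued map `V` on `ℝ³`, with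
`ñ_j = −i V†∂_j V` (indices `1,2,3` realized as `0,1,2 : Fin 3`), pointwise:
`2 tr(ñ₁ ∂₂ ñ₃) = ∂₃ tr(ñ₁ ñ₂) − ∂₁ tr(ñ₂ ñ₃) + ∂₂ tr(ñ₃ ñ₁) − i tr(ñ₁ [ñ₂, ñ₃])`.
This expresses the coordinate form of the winding-number density as the standard
Levi-Civita density up to total derivatives. -/
theorem two_trace_ntilde_pderiv_identity {N : ℕ}
    (V : (Fin 3 → ℝ) → Matrix (Fin N) (Fin N) ℂ)
    (hV : ContDiff ℝ 2 V)
    (hunit : ∀ θ, (V θ)ᴴ * V θ = 1) :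
    ∀ θ : Fin 3 → ℝ,
      2 * Matrix.trace (ntilde V 0 θ * matPderiv 1 (ntilde V 2) θ)
        = scalPderiv 2 (fun θ' => Matrix.trace (ntilde V 0 θ' * ntilde V 1 θ')) θ
          - scalPderiv 0 (fun θ' => Matrix.trace (ntilde V 1 θ' * ntilde V 2 θ')) θ
          + scalPderiv 1 (fun θ' => Matrix.trace (ntilde V 2 θ' * ntilde V 0 θ')) θ
          - Complex.I * Matrix.trace
              (ntilde V 0 θ * (ntilde V 1 θ * ntilde V 2 θ - ntilde V 2 θ * ntilde V 1 θ)) := by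
  intro θ
  have hm : matPderiv 1 (ntilde V 2) θ = fderiv ℝ (ntilde V 2) θ (Pi.single 1 1) := by
    rw [matPderiv, pderiv_eq_fderiv 1 (ntilde V 2) θ (ntilde_differentiable hV 2 θ)]
  rw [hm, trace_pd hV 0 1 2 θ, trace_pd hV 1 2 0 θ, trace_pd hV 2 0 1 θ]
  -- rewrite the "wrong-order" partials using the Maurer–Cartan relation
  have e1 : fderiv ℝ (ntilde V 0) θ (Pi.single 2 1)
      = fderiv ℝ (ntilde V 2) θ (Pi.single 0 1)
        + Complex.I • (ntilde V 0 θ * ntilde V 2 θ - ntilde V 2 θ * ntilde V 0 θ) := by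
    have h := mc hV hunit 0 2 θ
    have := sub_eq_iff_eq_add.mp h
    -- h : ∂₀ñ₂ − ∂₂ñ₀ = −i[ñ₀,ñ₂]
    have h' : fderiv ℝ (ntilde V 0) θ (Pi.single 2 1)
        = fderiv ℝ (ntilde V 2) θ (Pi.single 0 1)
          - (-Complex.I) • (ntilde V 0 θ * ntilde V 2 θ - ntilde V 2 θ * ntilde V 0 θ) := by
      rw [← h]; abel
    rw [h']; rw [neg_smul]; abel
  have e2 : fderiv ℝ (ntilde V 1) θ (Pi.single 2 1)
      = fderiv ℝ (ntilde V 2) θ (Pi.single 1 1)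
        + Complex.I • (ntilde V 1 θ * ntilde V 2 θ - ntilde V 2 θ * ntilde V 1 θ) := by
    have h := mc hV hunit 1 2 θ
    have h' : fderiv ℝ (ntilde V 1) θ (Pi.single 2 1)
        = fderiv ℝ (ntilde V 2) θ (Pi.single 1 1)
          - (-Complex.I) • (ntilde V 1 θ * ntilde V 2 θ - ntilde V 2 θ * ntilde V 1 θ) := by
      rw [← h]; abel
    rw [h']; rw [neg_smul]; abel
  have e3 : fderiv ℝ (ntilde V 1) θ (Pi.single 0 1)
      = fderiv ℝ (ntilde V 0) θ (Pi.single 1 1)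
        + (-Complex.I) • (ntilde V 0 θ * ntilde V 1 θ - ntilde V 1 θ * ntilde V 0 θ) := by
    have h := mc hV hunit 0 1 θ
    rw [← h]; abel
  rw [e1, e2, e3]
  exact trace_algebra (ntilde V 0 θ) (ntilde V 1 θ) (ntilde V 2 θ)
    (fderiv ℝ (ntilde V 2) θ (Pi.single 1 1)) (fderiv ℝ (ntilde V 2) θ (Pi.single 0 1))
    (fderiv ℝ (ntilde V 0) θ (Pi.single 1 1))
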